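/- Let f : [0,1] → ℝ. Define the central Riemann sum C_n(f) := (1/(n−1)) ∑_{k=1}^{n-1} f(k/n) for n ≥ 2, and the bilateral Riemann sum B_n(f) := (1/(n+1)) ∑_{k=0}^{n} f(k/n) for n ≥ 1. (1) If f is convex on [0,1], then C_n(f) is increasing in n and B_n(f) is decreasing in n. (2) If f is concave on [0,1], then C_n(f) is decreasing in n and B_n(f) is increasing in n. -/

import Mathlib

open Finset

/-- Central Riemann sum `C_n(f) = (1/(n-1)) ∑_{k=1}^{n-1} f (k/n)`. -/
noncomputable def riemannC (f : ℝ → ℝ) (n : ℕ) : ℝ :=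
  (1 / ((n : ℝ) - 1)) * ∑ k ∈ Finset.Ico 1 n, f ((k : ℝ) / (n : ℝ))

/-- Bilateral Riemann sum `B_n(f) = (1/(n+1)) ∑_{k=0}^{n} f (k/n)`. -/
noncomputable def riemannB (f : ℝ → ℝ) (n : ℕ) : ℝ :=
  (1 / ((n : ℝ) + 1)) * ∑ k ∈ Finset.range (n + 1), f ((k : ℝ) / (n : ℝ))

lemma sumC (f : ℝ → ℝ) (hf : ConvexOn ℝ (Set.Icc (0:ℝ) 1) f) {n : ℕ} (hn : 2 ≤ n) :
    ∑ k ∈ Finset.Ico 1 n, f ((k:ℝ)/n) ≤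
      (((n:ℝ)-1)/n) * ∑ j ∈ Finset.Ico 1 (n+1), f ((j:ℝ)/(n+1)) := by
  have hn0 : (0:ℝ) < n := by exact_mod_cast (by omega : 0 < n)
  have hn1 : (0:ℝ) < (n:ℝ) + 1 := by linarith
  have step1 : ∀ k ∈ Finset.Ico 1 n,
      f ((k:ℝ)/n) ≤ (1 - (k:ℝ)/n) * f ((k:ℝ)/(n+1)) + ((k:ℝ)/n) * f (((k:ℝ)+1)/(n+1)) := by
    intro k hk
    simp only [Finset.mem_Ico] at hk
    have hk1 : (1:ℝ) ≤ k := by exact_mod_cast hk.1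
    have hkn : (k:ℝ) < n := by exact_mod_cast hk.2
    have hx : (k:ℝ)/(n+1) ∈ Set.Icc (0:ℝ) 1 := by
      constructor
      · positivity
      · rw [div_le_one hn1]; linarith
    have hy : ((k:ℝ)+1)/(n+1) ∈ Set.Icc (0:ℝ) 1 := by
      constructor
      · positivity
      · rw [div_le_one hn1]; linarith
    have ha : (0:ℝ) ≤ 1 - (k:ℝ)/n := by
      rw [sub_nonneg, div_le_one hn0]; linarith
    have hb : (0:ℝ) ≤ (k:ℝ)/n := by positivity
    have hab : (1 - (k:ℝ)/n) + (k:ℝ)/n = 1 := by ring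
    have := hf.2 hx hy ha hb hab
    simp only [smul_eq_mul] at this
    have harg : (1 - (k:ℝ)/n) * ((k:ℝ)/(n+1)) + ((k:ℝ)/n) * (((k:ℝ)+1)/(n+1)) = (k:ℝ)/n := by
      field_simp; ring
    rwa [harg] at this
  calc ∑ k ∈ Finset.Ico 1 n, f ((k:ℝ)/n)
      ≤ ∑ k ∈ Finset.Ico 1 n,
          ((1 - (k:ℝ)/n) * f ((k:ℝ)/(n+1)) + ((k:ℝ)/n) * f (((k:ℝ)+1)/(n+1))) :=
        Finset.sum_le_sum step1
    _ = (∑ k ∈ Finset.Ico 1 n, (1 - (k:ℝ)/n) * f ((k:ℝ)/(n+1)))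
        + (∑ k ∈ Finset.Ico 1 n, ((k:ℝ)/n) * f (((k:ℝ)+1)/(n+1))) :=
        Finset.sum_add_distrib
    _ = (∑ k ∈ Finset.Ico 1 (n+1), (1 - (k:ℝ)/n) * f ((k:ℝ)/(n+1)))
        + (∑ k ∈ Finset.Ico 1 (n+1), (((k:ℝ)-1)/n) * f ((k:ℝ)/(n+1))) := by
        congr 1
        · rw [Finset.sum_Ico_succ_top (by omega : 1 ≤ n)]
          have : (1 - (n:ℝ)/n) * f ((n:ℝ)/(n+1)) = 0 := by
            rw [div_self hn0.ne']; ring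
          rw [this, add_zero]
        · -- reindex: LHS over Ico 1 n with f((k+1)/(n+1)), RHS over Ico 1 (n+1)
          rw [Finset.sum_Ico_eq_sum_range, Finset.sum_Ico_eq_sum_range]
          have h2 : n + 1 - 1 = (n - 1) + 1 := by omega
          rw [h2, Finset.sum_range_succ']
          have hz : (((1 + 0 : ℕ):ℝ) - 1)/(n:ℝ) * f (((1 + 0 : ℕ):ℝ)/((n:ℝ)+1)) = 0 := by
            norm_num
          rw [hz, add_zero]
          apply Finset.sum_congr rfl
          intro i _
          have e1 : ((1 + (i+1) : ℕ):ℝ) = ((1 + i : ℕ):ℝ) + 1 := by push_cast; ring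
          rw [e1]
          ring_nf
    _ = ∑ k ∈ Finset.Ico 1 (n+1), (((n:ℝ)-1)/n) * f ((k:ℝ)/(n+1)) := by
        rw [← Finset.sum_add_distrib]
        apply Finset.sum_congr rfl
        intro k _
        have : (1 - (k:ℝ)/n) + ((k:ℝ)-1)/n = ((n:ℝ)-1)/n := by
          field_simp; ring
        rw [← this]; ring
    _ = (((n:ℝ)-1)/n) * ∑ j ∈ Finset.Ico 1 (n+1), f ((j:ℝ)/(n+1)) := by
        rw [Finset.mul_sum]

lemma sumB (f : ℝ → ℝ) (hf : ConvexOn ℝ (Set.Icc (0:ℝ) 1) f) {n : ℕ} (hn : 1 ≤ n) :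
    ∑ k ∈ Finset.range (n+2), f ((k:ℝ)/((n:ℝ)+1)) ≤
      (((n:ℝ)+2)/((n:ℝ)+1)) * ∑ k ∈ Finset.range (n+1), f ((k:ℝ)/n) := by
  have hn0 : (0:ℝ) < n := by exact_mod_cast (by omega : 0 < n)
  have hn1 : (0:ℝ) < (n:ℝ) + 1 := by linarith
  have step1 : ∀ k ∈ Finset.range (n+2),
      f ((k:ℝ)/((n:ℝ)+1)) ≤ ((k:ℝ)/((n:ℝ)+1)) * f (((k:ℝ)-1)/n)
        + (((n:ℝ)+1-(k:ℝ))/((n:ℝ)+1)) * f ((k:ℝ)/n) := by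
    intro k hk
    simp only [Finset.mem_range] at hk
    rcases Nat.eq_zero_or_pos k with hk0 | hk1
    · subst hk0; norm_num [div_self hn1.ne']
    rcases eq_or_lt_of_le (by omega : k ≤ n + 1) with hktop | hklt
    · subst hktop
      push_cast
      have e1 : ((n:ℝ)+1)/((n:ℝ)+1) = 1 := div_self hn1.ne'
      have e2 : ((n:ℝ)+1-1)/(n:ℝ) = 1 := by field_simp; ring
      rw [e1, e2]
      simp
    · have hk1' : (1:ℝ) ≤ k := by exact_mod_cast hk1
      have hkn : (k:ℝ) ≤ n := by exact_mod_cast (by omega : k ≤ n)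
      have hx : ((k:ℝ)-1)/n ∈ Set.Icc (0:ℝ) 1 := by
        constructor
        · apply div_nonneg _ hn0.le; linarith
        · rw [div_le_one hn0]; linarith
      have hy : (k:ℝ)/n ∈ Set.Icc (0:ℝ) 1 := by
        constructor
        · positivity
        · rw [div_le_one hn0]; linarith
      have ha : (0:ℝ) ≤ (k:ℝ)/((n:ℝ)+1) := by positivity
      have hb : (0:ℝ) ≤ ((n:ℝ)+1-(k:ℝ))/((n:ℝ)+1) := by
        apply div_nonneg _ hn1.le; linarith
      have hab : (k:ℝ)/((n:ℝ)+1) + ((n:ℝ)+1-(k:ℝ))/((n:ℝ)+1) = 1 := by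
        field_simp; ring
      have := hf.2 hx hy ha hb hab
      simp only [smul_eq_mul] at this
      have harg : ((k:ℝ)/((n:ℝ)+1)) * (((k:ℝ)-1)/n)
          + (((n:ℝ)+1-(k:ℝ))/((n:ℝ)+1)) * ((k:ℝ)/n) = (k:ℝ)/((n:ℝ)+1) := by
        field_simp; ring
      rwa [harg] at this
  calc ∑ k ∈ Finset.range (n+2), f ((k:ℝ)/((n:ℝ)+1))
      ≤ ∑ k ∈ Finset.range (n+2), (((k:ℝ)/((n:ℝ)+1)) * f (((k:ℝ)-1)/n)
          + (((n:ℝ)+1-(k:ℝ))/((n:ℝ)+1)) * f ((k:ℝ)/n)) := Finset.sum_le_sum step1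
    _ = (∑ k ∈ Finset.range (n+2), ((k:ℝ)/((n:ℝ)+1)) * f (((k:ℝ)-1)/n))
        + (∑ k ∈ Finset.range (n+2), (((n:ℝ)+1-(k:ℝ))/((n:ℝ)+1)) * f ((k:ℝ)/n)) :=
        Finset.sum_add_distrib
    _ = (∑ k ∈ Finset.range (n+1), (((k:ℝ)+1)/((n:ℝ)+1)) * f ((k:ℝ)/n))
        + (∑ k ∈ Finset.range (n+1), (((n:ℝ)+1-(k:ℝ))/((n:ℝ)+1)) * f ((k:ℝ)/n)) := by
        congr 1
        · rw [Finset.sum_range_succ']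
          have hz : (((0:ℕ):ℝ)/((n:ℝ)+1)) * f ((((0:ℕ):ℝ)-1)/n) = 0 := by norm_num
          rw [hz, add_zero]
          apply Finset.sum_congr rfl
          intro i _
          push_cast
          ring_nf
        · rw [Finset.sum_range_succ]
          have hz : (((n:ℝ)+1-((n+1:ℕ):ℝ))/((n:ℝ)+1)) * f (((n+1:ℕ):ℝ)/n) = 0 := by
            push_cast; norm_num
          rw [hz, add_zero]
    _ = ∑ k ∈ Finset.range (n+1), (((n:ℝ)+2)/((n:ℝ)+1)) * f ((k:ℝ)/n) := by
        rw [← Finset.sum_add_distrib]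
        apply Finset.sum_congr rfl
        intro k _
        have : ((k:ℝ)+1)/((n:ℝ)+1) + ((n:ℝ)+1-(k:ℝ))/((n:ℝ)+1) = ((n:ℝ)+2)/((n:ℝ)+1) := by
          field_simp; ring
        rw [← this]; ring
    _ = (((n:ℝ)+2)/((n:ℝ)+1)) * ∑ k ∈ Finset.range (n+1), f ((k:ℝ)/n) := by
        rw [Finset.mul_sum]

lemma convC (g : ℝ → ℝ) (hg : ConvexOn ℝ (Set.Icc (0:ℝ) 1) g) (n : ℕ) (hn : 2 ≤ n) :
    riemannC g n ≤ riemannC g (n+1) := by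
  have h1 : (0:ℝ) < (n:ℝ) - 1 := by
    have : (2:ℝ) ≤ n := by exact_mod_cast hn
    linarith
  have h2 : (0:ℝ) < (n:ℝ) := by linarith
  have key := sumC g hg hn
  simp only [riemannC]
  push_cast
  calc (1/((n:ℝ)-1)) * ∑ k ∈ Finset.Ico 1 n, g ((k:ℝ)/n)
      ≤ (1/((n:ℝ)-1)) * ((((n:ℝ)-1)/n) * ∑ j ∈ Finset.Ico 1 (n+1), g ((j:ℝ)/((n:ℝ)+1))) :=
        mul_le_mul_of_nonneg_left key (by positivity)
    _ = (1/((n:ℝ)+1-1)) * ∑ j ∈ Finset.Ico 1 (n+1), g ((j:ℝ)/((n:ℝ)+1)) := by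
        have e : (n:ℝ)+1-1 = n := by ring
        have e1 : (n:ℝ)-1 ≠ 0 := h1.ne'
        rw [e]
        field_simp

lemma convB (g : ℝ → ℝ) (hg : ConvexOn ℝ (Set.Icc (0:ℝ) 1) g) (n : ℕ) (hn : 1 ≤ n) :
    riemannB g (n+1) ≤ riemannB g n := by
  have h2 : (0:ℝ) < (n:ℝ) := by exact_mod_cast (by omega : 0 < n)
  have key := sumB g hg hn
  simp only [riemannB]
  push_cast
  calc (1/((n:ℝ)+1+1)) * ∑ k ∈ Finset.range (n+1+1), g ((k:ℝ)/((n:ℝ)+1))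
      ≤ (1/((n:ℝ)+1+1)) * ((((n:ℝ)+2)/((n:ℝ)+1)) * ∑ k ∈ Finset.range (n+1), g ((k:ℝ)/n)) :=
        mul_le_mul_of_nonneg_left key (by positivity)
    _ = (1/((n:ℝ)+1)) * ∑ k ∈ Finset.range (n+1), g ((k:ℝ)/n) := by
        have e1 : ((n:ℝ)+1) ≠ 0 := by positivity
        have e2 : ((n:ℝ)+1+1) ≠ 0 := by positivity
        field_simp
        ring

lemma negC (g : ℝ → ℝ) (n : ℕ) : riemannC (-g) n = - riemannC g n := by
  simp [riemannC, Pi.neg_apply, Finset.sum_neg_distrib, mul_neg]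

lemma negB (g : ℝ → ℝ) (n : ℕ) : riemannB (-g) n = - riemannB g n := by
  simp [riemannB, Pi.neg_apply, Finset.sum_neg_distrib, mul_neg]

theorem stmt3 (f : ℝ → ℝ) :
    (ConvexOn ℝ (Set.Icc (0:ℝ) 1) f →
      (∀ n : ℕ, 2 ≤ n → riemannC f n ≤ riemannC f (n + 1)) ∧
      (∀ n : ℕ, 1 ≤ n → riemannB f (n + 1) ≤ riemannB f n)) ∧
    (ConcaveOn ℝ (Set.Icc (0:ℝ) 1) f →
      (∀ n : ℕ, 2 ≤ n → riemannC f (n + 1) ≤ riemannC f n) ∧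
      (∀ n : ℕ, 1 ≤ n → riemannB f n ≤ riemannB f (n + 1))) := by
  refine ⟨fun h => ⟨fun n hn => convC f h n hn, fun n hn => convB f h n hn⟩,
    fun h => ⟨fun n hn => ?_, fun n hn => ?_⟩⟩
  · have := convC (-f) h.neg n hn
    rw [negC, negC] at this
    linarith
  · have := convB (-f) h.neg n hn
    rw [negB, negB] at this
    linarith
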